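/- For each ε > 0 and d ∈ ℝ, every (PS)_d sequence {u_n} for J_ε (i.e. J_ε(u_n) → d and J_ε′(u_n) → 0 in the dual of H_ε) is bounded in H_ε; more precisely, there is a constant C with (ϑ−2)/(2ϑ) · (m₀ − 1/K) · ‖u_n‖_ε² ≤ C + ‖u_n‖_ε for all n. -/

import Mathlib

noncomputable section

open MeasureTheory Filter Topology Set Metric
open scoped Classical

/-- Euclidean space `ℝ³`. -/
abbrev E3 := EuclideanSpace ℝ (Fin 3)

/-- Finiteness of the squared Gagliardo seminorm `[u]² < ∞`. -/
def GagliardoFinite (s : ℝ) (u : E3 → ℝ) : Prop :=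
  MeasureTheory.Integrable
    (fun p : E3 × E3 => (u p.1 - u p.2) ^ 2 / ‖p.1 - p.2‖ ^ (3 + 2 * s)) volume

/-- Membership in the fractional Sobolev space `H^s(ℝ³)`. -/
def MemHs (s : ℝ) (u : E3 → ℝ) : Prop :=
  MeasureTheory.MemLp u 2 volume ∧ GagliardoFinite s u

/-- The Gagliardo bilinear form
`∬ (u(x)-u(y))(v(x)-v(y))/|x-y|^{3+2s} dx dy`. -/
def fracInner (s : ℝ) (u v : E3 → ℝ) : ℝ :=
  ∫ x : E3, ∫ y : E3, (u x - u y) * (v x - v y) / ‖x - y‖ ^ (3 + 2 * s)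

/-- The squared Gagliardo seminorm `[u]²`. -/
def gagliardoSq (s : ℝ) (u : E3 → ℝ) : ℝ := fracInner s u u

/-- Membership in `H_ε = {u ∈ H^s : ∫ V(εx)u² < ∞}`. -/
def MemHe (s : ℝ) (V : E3 → ℝ) (ε : ℝ) (u : E3 → ℝ) : Prop :=
  MemHs s u ∧ MeasureTheory.Integrable (fun x : E3 => V (ε • x) * u x ^ 2) volume

/-- The inner product `(u,v)_ε` of `H_ε`. -/
def innerE (s : ℝ) (V : E3 → ℝ) (ε : ℝ) (u v : E3 → ℝ) : ℝ :=
  fracInner s u v + ∫ x : E3, V (ε • x) * u x * v x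

/-- The squared norm `‖u‖_ε²` of `H_ε`. -/
def normSqE (s : ℝ) (V : E3 → ℝ) (ε : ℝ) (u : E3 → ℝ) : ℝ := innerE s V ε u u

/-- `M̂(t) = ∫₀ᵗ M(τ) dτ`. -/
def Mhat (M : ℝ → ℝ) (t : ℝ) : ℝ := ∫ τ in (0:ℝ)..t, M τ

/-- `F(t) = ∫₀ᵗ f(τ) dτ`. -/
def Fprim (f : ℝ → ℝ) (t : ℝ) : ℝ := ∫ τ in (0:ℝ)..t, f τ

/-- The truncation `f̃` of the penalization scheme. -/
def ftil (f : ℝ → ℝ) (V₀ K a t : ℝ) : ℝ := if t ≤ a then f t else V₀ / K * t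

/-- The penalized nonlinearity `g(x,t) = χ_Ω(x) f(t) + (1-χ_Ω(x)) f̃(t)`. -/
def gpen (Ω : Set E3) (f : ℝ → ℝ) (V₀ K a : ℝ) (x : E3) (t : ℝ) : ℝ :=
  if x ∈ Ω then f t else ftil f V₀ K a t

/-- `G(x,t) = ∫₀ᵗ g(x,τ) dτ`. -/
def Gpen (Ω : Set E3) (f : ℝ → ℝ) (V₀ K a : ℝ) (x : E3) (t : ℝ) : ℝ :=
  ∫ τ in (0:ℝ)..t, gpen Ω f V₀ K a x τ

/-- The penalized energy functional `J_ε`. -/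
def Je (s : ℝ) (M : ℝ → ℝ) (V : E3 → ℝ) (Ω : Set E3) (f : ℝ → ℝ)
    (V₀ K a ε : ℝ) (u : E3 → ℝ) : ℝ :=
  1 / 2 * Mhat M (normSqE s V ε u) - ∫ x : E3, Gpen Ω f V₀ K a (ε • x) (u x)

/-- The pairing `⟨J_ε'(u), φ⟩`. -/
def JeDeriv (s : ℝ) (M : ℝ → ℝ) (V : E3 → ℝ) (Ω : Set E3) (f : ℝ → ℝ)
    (V₀ K a ε : ℝ) (u φ : E3 → ℝ) : ℝ :=
  M (normSqE s V ε u) * innerE s V ε u φ - ∫ x : E3, gpen Ω f V₀ K a (ε • x) (u x) * φ x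

/-- The Nehari manifold `N_ε = {u ∈ H_ε \ {0} : ⟨J_ε'(u), u⟩ = 0}`. -/
def MemNehariE (s : ℝ) (M : ℝ → ℝ) (V : E3 → ℝ) (Ω : Set E3) (f : ℝ → ℝ)
    (V₀ K a ε : ℝ) (u : E3 → ℝ) : Prop :=
  MemHe s V ε u ∧ u ≠ 0 ∧ JeDeriv s M V Ω f V₀ K a ε u u = 0

/-- `H_ε⁺ = {u ∈ H_ε : |supp(u⁺) ∩ Ω_ε| > 0}`. -/
def MemHePlus (s : ℝ) (V : E3 → ℝ) (Ω : Set E3) (ε : ℝ) (u : E3 → ℝ) : Prop :=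
  MemHe s V ε u ∧ 0 < volume ({x : E3 | 0 < u x} ∩ {x : E3 | ε • x ∈ Ω})

/-- Strong convergence in `H_ε`. -/
def TendstoE (s : ℝ) (V : E3 → ℝ) (ε : ℝ) (u : ℕ → E3 → ℝ) (v : E3 → ℝ) : Prop :=
  Tendsto (fun n => normSqE s V ε (fun x => u n x - v x)) atTop (𝓝 0)

/-- `(PS)_d` sequence for `J_ε`: `J_ε(u_n) → d` and `J_ε'(u_n) → 0` in the dual of `H_ε`. -/
def PSSeqE (s : ℝ) (M : ℝ → ℝ) (V : E3 → ℝ) (Ω : Set E3) (f : ℝ → ℝ)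
    (V₀ K a ε d : ℝ) (u : ℕ → E3 → ℝ) : Prop :=
  (∀ n, MemHe s V ε (u n)) ∧
  Tendsto (fun n => Je s M V Ω f V₀ K a ε (u n)) atTop (𝓝 d) ∧
  ∀ η > (0:ℝ), ∃ N : ℕ, ∀ n ≥ N, ∀ φ : E3 → ℝ, MemHe s V ε φ → normSqE s V ε φ ≤ 1 →
    |JeDeriv s M V Ω f V₀ K a ε (u n) φ| ≤ η

/-- Inner product of the autonomous space `H₀`. -/
def innerO (s V₀ : ℝ) (u v : E3 → ℝ) : ℝ :=
  fracInner s u v + ∫ x : E3, V₀ * u x * v x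

/-- Squared norm `‖u‖₀²` of the autonomous space. -/
def normSqO (s V₀ : ℝ) (u : E3 → ℝ) : ℝ := innerO s V₀ u u

/-- The autonomous energy functional `J₀`. -/
def J0 (s : ℝ) (M : ℝ → ℝ) (V₀ : ℝ) (f : ℝ → ℝ) (u : E3 → ℝ) : ℝ :=
  1 / 2 * Mhat M (normSqO s V₀ u) - ∫ x : E3, Fprim f (u x)

/-- The pairing `⟨J₀'(u), φ⟩`. -/
def J0Deriv (s : ℝ) (M : ℝ → ℝ) (V₀ : ℝ) (f : ℝ → ℝ) (u φ : E3 → ℝ) : ℝ :=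
  M (normSqO s V₀ u) * innerO s V₀ u φ - ∫ x : E3, f (u x) * φ x

/-- The autonomous Nehari manifold `N₀`. -/
def MemNehari0 (s : ℝ) (M : ℝ → ℝ) (V₀ : ℝ) (f : ℝ → ℝ) (u : E3 → ℝ) : Prop :=
  MemHs s u ∧ u ≠ 0 ∧ J0Deriv s M V₀ f u u = 0

/-- The autonomous ground-state level `c₀ = inf_{N₀} J₀`. -/
def c0lvl (s : ℝ) (M : ℝ → ℝ) (V₀ : ℝ) (f : ℝ → ℝ) : ℝ :=
  sInf (J0 s M V₀ f '' {u | MemNehari0 s M V₀ f u})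

/-- `A` is contractible inside `X`: the inclusion `A ↪ X` is null-homotopic. -/
def ContractibleIn (A X : Set E3) : Prop :=
  A ⊆ X ∧ ∃ x₀ ∈ X, ∃ H : ℝ × E3 → E3,
    ContinuousOn H (Icc (0:ℝ) 1 ×ˢ A) ∧
    (∀ t ∈ Icc (0:ℝ) 1, ∀ a ∈ A, H (t, a) ∈ X) ∧
    (∀ a ∈ A, H (0, a) = a) ∧ (∀ a ∈ A, H (1, a) = x₀)

/-- The Ljusternik–Schnirelmann category `cat_X(Y)`: the least number of closed
contractible (in `X`) subsets of `X` covering `Y`. -/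
def lsCat (X Y : Set E3) : ℕ :=
  sInf {n : ℕ | ∃ C : Fin n → Set E3, (∀ i, IsClosed (C i)) ∧
    (∀ i, ContractibleIn (C i) X) ∧ Y ⊆ ⋃ i, C i}


/-- Strong convergence in the autonomous space `H₀`. -/
def TendstoO (s V₀ : ℝ) (u : ℕ → E3 → ℝ) (v : E3 → ℝ) : Prop :=
  Tendsto (fun n => normSqO s V₀ (fun x => u n x - v x)) atTop (𝓝 0)

/-- `(PS)_d` sequence for the autonomous functional `J₀`. -/
def PSSeq0 (s : ℝ) (M : ℝ → ℝ) (V₀ : ℝ) (f : ℝ → ℝ) (d : ℝ) (u : ℕ → E3 → ℝ) : Prop :=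
  (∀ n, MemHs s (u n)) ∧
  Tendsto (fun n => J0 s M V₀ f (u n)) atTop (𝓝 d) ∧
  ∀ η > (0:ℝ), ∃ N : ℕ, ∀ n ≥ N, ∀ φ : E3 → ℝ, MemHs s φ → normSqO s V₀ φ ≤ 1 →
    |J0Deriv s M V₀ f (u n) φ| ≤ η

/-- The function `Ψ_{ε,y}(x) = η(|εx - y|) w((εx - y)/ε)`. -/
def PsiFn (η : ℝ → ℝ) (w : E3 → ℝ) (ε : ℝ) (y x : E3) : ℝ :=
  η ‖ε • x - y‖ * w (ε⁻¹ • (ε • x - y))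

/-- The truncation map `Υ` used in the barycenter. -/
def UpsilonMap (ρ : ℝ) (x : E3) : E3 := if ‖x‖ < ρ then x else (ρ / ‖x‖) • x

/-- The barycenter map `β_ε(u) = (∫ Υ(εx) u² dx) / (∫ u² dx)`. -/
def bary (ρ ε : ℝ) (u : E3 → ℝ) : E3 :=
  (∫ x : E3, u x ^ 2)⁻¹ • ∫ x : E3, u x ^ 2 • UpsilonMap ρ (ε • x)

/-- Weak solution of the original problem
`M(ε^{2s-3}[u]² + ε^{-3}∫V u²)[ε^{2s}(-Δ)^s u + V(x)u] = f(u)` in `ℝ³`. -/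
def IsSolutionOrig (s : ℝ) (M : ℝ → ℝ) (V : E3 → ℝ) (f : ℝ → ℝ) (ε : ℝ)
    (u : E3 → ℝ) : Prop :=
  MemHs s u ∧ MeasureTheory.Integrable (fun x : E3 => V x * u x ^ 2) volume ∧
  ∀ φ : E3 → ℝ, MemHs s φ →
    MeasureTheory.Integrable (fun x : E3 => V x * φ x ^ 2) volume →
    M (ε ^ (2 * s - 3) * gagliardoSq s u + ε ^ (-3 : ℝ) * ∫ x : E3, V x * u x ^ 2) *
        (ε ^ (2 * s) * fracInner s u φ + ∫ x : E3, V x * u x * φ x)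
      = ∫ x : E3, f (u x) * φ x


section Aux
variable {s c : ℝ} {u v : E3 → ℝ}

lemma aux_fracInner_self_nonneg (s : ℝ) (u : E3 → ℝ) : 0 ≤ fracInner s u u := by
  unfold fracInner
  refine integral_nonneg fun x => integral_nonneg fun y => ?_
  have : (u x - u y) * (u x - u y) = (u x - u y)^2 := by ring
  rw [this]
  positivity

lemma aux_fracInner_const_mul_right (s c : ℝ) (u v : E3 → ℝ) :
    fracInner s u (fun x => c * v x) = c * fracInner s u v := by
  unfold fracInner
  have h1 : ∀ x y : E3, (u x - u y) * (c * v x - c * v y) / ‖x - y‖ ^ (3 + 2*s)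
      = c * ((u x - u y) * (v x - v y) / ‖x - y‖ ^ (3 + 2*s)) := fun x y => by ring
  simp_rw [h1, MeasureTheory.integral_const_mul]

lemma aux_fracInner_const_mul_self (s c : ℝ) (u : E3 → ℝ) :
    fracInner s (fun x => c * u x) (fun x => c * u x) = c^2 * fracInner s u u := by
  unfold fracInner
  have h1 : ∀ x y : E3, (c * u x - c * u y) * (c * u x - c * u y) / ‖x - y‖ ^ (3 + 2*s)
      = c^2 * ((u x - u y) * (u x - u y) / ‖x - y‖ ^ (3 + 2*s)) := fun x y => by ring
  simp_rw [h1, MeasureTheory.integral_const_mul]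

end Aux
section Aux2

variable {f : ℝ → ℝ} {V₀ K a ϑ : ℝ} {Ω : Set E3}

lemma aux_ftil_cont (hfcont : Continuous f) (hfa : f a = V₀ / K * a) :
    Continuous (ftil f V₀ K a) := by
  unfold ftil
  exact Continuous.if_le hfcont (continuous_const.mul continuous_id) continuous_id
    continuous_const (fun x hx => by rw [hx, hfa])

lemma aux_f_nonneg (hfneg : ∀ t ≤ (0:ℝ), f t = 0)
    (hf3 : ∀ t : ℝ, 0 < t → 0 < ϑ * Fprim f t ∧ ϑ * Fprim f t ≤ f t * t) :
    ∀ t : ℝ, 0 ≤ f t := by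
  intro t
  rcases le_or_gt t 0 with ht | ht
  · rw [hfneg t ht]
  · obtain ⟨h1, h2⟩ := hf3 t ht
    nlinarith

lemma aux_gpen_nonneg (hV₀ : 0 < V₀) (hK : 0 < K) (ha : 0 < a)
    (hfneg : ∀ t ≤ (0:ℝ), f t = 0)
    (hf3 : ∀ t : ℝ, 0 < t → 0 < ϑ * Fprim f t ∧ ϑ * Fprim f t ≤ f t * t) :
    ∀ (x : E3) (t : ℝ), 0 ≤ gpen Ω f V₀ K a x t := by
  intro x t
  have hf := aux_f_nonneg hfneg hf3
  unfold gpen ftil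
  split
  · exact hf t
  split
  · exact hf t
  next h =>
    have ht : 0 < t := lt_trans ha (not_le.1 h)
    positivity
section Aux3
variable {f : ℝ → ℝ} {V₀ K a ϑ : ℝ} {Ω : Set E3}

lemma aux_Gpen_in {x : E3} (hx : x ∈ Ω) (t : ℝ) :
    Gpen Ω f V₀ K a x t = Fprim f t := by
  unfold Gpen Fprim
  refine intervalIntegral.integral_congr fun τ _ => ?_
  simp [gpen, hx]

lemma aux_Gpen_out {x : E3} (hx : x ∉ Ω) (t : ℝ) :
    Gpen Ω f V₀ K a x t = ∫ τ in (0:ℝ)..t, ftil f V₀ K a τ := by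
  unfold Gpen
  refine intervalIntegral.integral_congr fun τ _ => ?_
  simp [gpen, hx]

lemma aux_ftil_primitive_le (ha : 0 < a) (ht : t ≤ a) :
    (∫ τ in (0:ℝ)..t, ftil f V₀ K a τ) = Fprim f t := by
  unfold Fprim
  refine intervalIntegral.integral_congr fun τ hτ => ?_
  have hτa : τ ≤ a := by
    rcases le_total 0 t with h0 | h0
    · rw [Set.uIcc_of_le h0] at hτ; exact le_trans hτ.2 ht
    · rw [Set.uIcc_of_ge h0] at hτ; exact le_trans hτ.2 ha.le
  simp [ftil, hτa]

lemma aux_ftil_primitive_gt (hfcont : Continuous f) (hfa : f a = V₀ / K * a)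
    (ha : 0 < a) (ht : a < t) :
    (∫ τ in (0:ℝ)..t, ftil f V₀ K a τ) = Fprim f a + V₀ / K * ((t^2 - a^2)/2) := by
  have hc := aux_ftil_cont (V₀ := V₀) (K := K) (a := a) hfcont hfa
  have hsplit : (∫ τ in (0:ℝ)..a, ftil f V₀ K a τ) + (∫ τ in a..t, ftil f V₀ K a τ)
      = ∫ τ in (0:ℝ)..t, ftil f V₀ K a τ :=
    intervalIntegral.integral_add_adjacent_intervals
      (hc.intervalIntegrable _ _) (hc.intervalIntegrable _ _)
  rw [← hsplit, aux_ftil_primitive_le ha le_rfl]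
  congr 1
  have : (∫ τ in a..t, ftil f V₀ K a τ) = ∫ τ in a..t, V₀ / K * τ := by
    refine intervalIntegral.integral_congr fun τ hτ => ?_
    rw [Set.uIcc_of_le ht.le] at hτ
    rcases eq_or_lt_of_le hτ.1 with h | h
    · rw [← h]; simp [ftil, hfa]
    · simp [ftil, not_le.2 h]
  rw [this, intervalIntegral.integral_const_mul, integral_id]

lemma aux_Gpen_nonpos (ha : 0 < a) (hfneg : ∀ t ≤ (0:ℝ), f t = 0)
    {t : ℝ} (ht : t ≤ 0) (x : E3) :
    Gpen Ω f V₀ K a x t = 0 := by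
  unfold Gpen
  have : (∫ τ in (0:ℝ)..t, gpen Ω f V₀ K a x τ) = ∫ τ in (0:ℝ)..t, (0:ℝ) := by
    refine intervalIntegral.integral_congr fun τ hτ => ?_
    rw [Set.uIcc_of_ge ht] at hτ
    have hτ0 : τ ≤ 0 := hτ.2
    have hτa : τ ≤ a := le_trans hτ0 ha.le
    simp [gpen, ftil, hτa, hfneg τ hτ0]
  rw [this, intervalIntegral.integral_zero]

lemma aux_Gpen_nonneg (hV₀ : 0 < V₀) (hK : 0 < K) (ha : 0 < a)
    (hfneg : ∀ t ≤ (0:ℝ), f t = 0)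
    (hf3 : ∀ t : ℝ, 0 < t → 0 < ϑ * Fprim f t ∧ ϑ * Fprim f t ≤ f t * t)
    (x : E3) (t : ℝ) : 0 ≤ Gpen Ω f V₀ K a x t := by
  rcases le_or_gt t 0 with ht | ht
  · rw [aux_Gpen_nonpos ha hfneg ht]
  · exact intervalIntegral.integral_nonneg ht.le
      (fun τ _ => aux_gpen_nonneg hV₀ hK ha hfneg hf3 x τ)
section Aux4
variable {f : ℝ → ℝ} {V₀ K a ϑ : ℝ} {Ω : Set E3}

lemma aux_Fprim_le (hϑ4 : 4 < ϑ)
    (hf3 : ∀ t : ℝ, 0 < t → 0 < ϑ * Fprim f t ∧ ϑ * Fprim f t ≤ f t * t)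
    {t : ℝ} (ht : 0 < t) : Fprim f t ≤ 1/ϑ * (f t * t) := by
  have h := (hf3 t ht).2
  have hϑ : (0:ℝ) < ϑ := by linarith
  rw [div_mul_eq_mul_div, le_div_iff₀ hϑ]
  linarith

lemma aux_Gpen_key (hϑ4 : 4 < ϑ) (hV₀ : 0 < V₀) (hK : 0 < K) (ha : 0 < a)
    (hfcont : Continuous f) (hfneg : ∀ t ≤ (0:ℝ), f t = 0)
    (hf3 : ∀ t : ℝ, 0 < t → 0 < ϑ * Fprim f t ∧ ϑ * Fprim f t ≤ f t * t)
    (hfa : f a = V₀ / K * a) (x : E3) (t : ℝ) :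
    Gpen Ω f V₀ K a x t
      ≤ 1/ϑ * (gpen Ω f V₀ K a x t * t) + (ϑ - 2)/(2*ϑ) * (V₀/K) * t^2 := by
  have hϑ : (0:ℝ) < ϑ := by linarith
  have hgN := aux_gpen_nonneg (Ω := Ω) hV₀ hK ha hfneg hf3
  rcases le_or_gt t 0 with ht | ht
  · rw [aux_Gpen_nonpos ha hfneg ht x]
    have h1 : 0 ≤ gpen Ω f V₀ K a x t * t := by
      rcases eq_or_lt_of_le ht with h | h
      · rw [h, mul_zero]
      · have : gpen Ω f V₀ K a x t = 0 := by
          have hta : t ≤ a := le_trans ht ha.le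
          simp [gpen, ftil, hta, hfneg t ht]
        rw [this, zero_mul]
    have h2 : 0 ≤ (ϑ - 2)/(2*ϑ) * (V₀/K) * t^2 :=
      mul_nonneg (mul_nonneg (div_nonneg (by linarith) (by linarith)) (by positivity))
        (sq_nonneg t)
    have h3 : 0 ≤ 1/ϑ * (gpen Ω f V₀ K a x t * t) := mul_nonneg (by positivity) h1
    linarith
  · by_cases hx : x ∈ Ω
    · rw [aux_Gpen_in hx]
      have := aux_Fprim_le hϑ4 hf3 ht
      have h2 : 0 ≤ (ϑ - 2)/(2*ϑ) * (V₀/K) * t^2 :=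
        mul_nonneg (mul_nonneg (div_nonneg (by linarith) (by linarith)) (by positivity))
          (sq_nonneg t)
      simp only [gpen, if_pos hx]
      linarith
    · rw [aux_Gpen_out hx]
      simp only [gpen, if_neg hx]
      rcases le_or_gt t a with hta | hta
      · rw [aux_ftil_primitive_le ha hta]
        have := aux_Fprim_le hϑ4 hf3 ht
        have h2 : 0 ≤ (ϑ - 2)/(2*ϑ) * (V₀/K) * t^2 :=
          mul_nonneg (mul_nonneg (div_nonneg (by linarith) (by linarith)) (by positivity))
            (sq_nonneg t)
        simp only [ftil, if_pos hta]
        linarith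
      · rw [aux_ftil_primitive_gt hfcont hfa ha hta]
        simp only [ftil, if_neg (not_le.2 hta)]
        have hFa : Fprim f a ≤ 1/ϑ * (V₀/K) * a^2 := by
          have := aux_Fprim_le hϑ4 hf3 ha
          rw [hfa] at this
          nlinarith
        have hVK : 0 < V₀ / K := by positivity
        have hrhs : 1/ϑ * (V₀/K * t * t) + (ϑ - 2)/(2*ϑ) * (V₀/K) * t^2
            = V₀/K * t^2 / 2 := by field_simp; ring
        have h12 : 1/ϑ ≤ 1/2 := by
          rw [div_le_div_iff₀ hϑ (by norm_num)]; linarith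
        have hFa2 : 1/ϑ * (V₀/K) * a^2 ≤ 1/2 * (V₀/K) * a^2 :=
          mul_le_mul_of_nonneg_right (mul_le_mul_of_nonneg_right h12 hVK.le) (sq_nonneg a)
        have expand : V₀/K * ((t^2 - a^2)/2) = V₀/K * t^2 / 2 - 1/2 * (V₀/K) * a^2 := by
          ring
        linarith
end Aux4
section Aux5

lemma aux_Mhat_ge {M : ℝ → ℝ} {m₀ : ℝ} (hm₀ : 0 < m₀) (hMcont : Continuous M)
    (hM1 : ∀ t : ℝ, 0 ≤ t → m₀ ≤ M t)
    (hM3 : ∀ t₁ t₂ : ℝ, 0 < t₂ → t₂ ≤ t₁ →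
      M t₁ / t₁ - M t₂ / t₂ ≤ m₀ * (1 / t₁ - 1 / t₂))
    {t : ℝ} (ht : 0 ≤ t) :
    m₀ * t / 2 + M t * t / 2 ≤ Mhat M t := by
  rcases eq_or_lt_of_le ht with h | htpos
  · rw [← h]; simp [Mhat]
  have hIntM : IntervalIntegrable M MeasureTheory.volume 0 t :=
    hMcont.intervalIntegrable _ _
  have hIntL : IntervalIntegrable (fun τ => m₀ + (M t - m₀)/t * τ)
      MeasureTheory.volume 0 t :=
    (continuous_const.add (continuous_const.mul continuous_id)).intervalIntegrable _ _
  have hmono : ∀ τ ∈ Set.Icc (0:ℝ) t, m₀ + (M t - m₀)/t * τ ≤ M τ := by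
    intro τ ⟨h0, hτt⟩
    rcases eq_or_lt_of_le h0 with h | hτpos
    · rw [← h]; simpa using hM1 0 le_rfl
    · have key := hM3 t τ hτpos hτt
      have h2 : (M t / t - M τ / τ) * (t * τ) ≤ m₀ * (1/t - 1/τ) * (t * τ) :=
        mul_le_mul_of_nonneg_right key (by positivity)
      have e1 : (M t / t - M τ / τ) * (t * τ) = M t * τ - M τ * t := by
        field_simp
      have e2 : m₀ * (1/t - 1/τ) * (t * τ) = m₀ * τ - m₀ * t := by
        field_simp
      rw [e1, e2] at h2
      have goal2 : (m₀ + (M t - m₀)/t * τ) * t ≤ M τ * t := by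
        have e3 : (m₀ + (M t - m₀)/t * τ) * t = m₀ * t + (M t - m₀) * τ := by
          field_simp
        rw [e3]; linarith
      exact le_of_mul_le_mul_right (by linarith [goal2]) htpos
  have hle := intervalIntegral.integral_mono_on htpos.le hIntL hIntM hmono
  have hcomp : (∫ τ in (0:ℝ)..t, (m₀ + (M t - m₀)/t * τ))
      = m₀ * t / 2 + M t * t / 2 := by
    rw [intervalIntegral.integral_add (intervalIntegrable_const)
      ((intervalIntegral.intervalIntegrable_id).const_mul _),
      intervalIntegral.integral_const, intervalIntegral.integral_const_mul, integral_id]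
    field_simp
    ring
  rw [hcomp] at hle
  exact hle

end Aux5
set_option maxHeartbeats 2000000 in
/-- Lemma 3.4: `(PS)_d` sequences for `J_ε` are bounded in `H_ε`,
with the explicit estimate `(ϑ-2)/(2ϑ) (m₀ - 1/K) ‖u_n‖_ε² ≤ C + ‖u_n‖_ε`. -/
theorem PS_sequences_bounded
    (s : ℝ) (hs : 3 / 4 < s ∧ s < 1)
    (M : ℝ → ℝ) (m₀ : ℝ) (hm₀ : 0 < m₀) (hMcont : Continuous M)
    (hM1 : ∀ t : ℝ, 0 ≤ t → m₀ ≤ M t) (hM2 : MonotoneOn M (Ici (0:ℝ)))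
    (hM3 : ∀ t₁ t₂ : ℝ, 0 < t₂ → t₂ ≤ t₁ →
      M t₁ / t₁ - M t₂ / t₂ ≤ m₀ * (1 / t₁ - 1 / t₂))
    (V : E3 → ℝ) (hVcont : Continuous V) (V₀ : ℝ) (hV₀ : 0 < V₀)
    (hVinf : IsGLB (Set.range V) V₀)
    (Ω : Set E3) (hΩopen : IsOpen Ω) (hΩbd : Bornology.IsBounded Ω)
    (hΩV : ∀ x ∈ frontier Ω, V₀ < V x)
    (hΛne : {x ∈ Ω | V x = V₀}.Nonempty)
    (f : ℝ → ℝ) (hfcont : Continuous f) (hfneg : ∀ t ≤ (0:ℝ), f t = 0)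
    (hf1 : Tendsto (fun t => f t / t ^ 3) (𝓝[>] (0:ℝ)) (𝓝 0))
    (q : ℝ) (hq : 4 < q ∧ q < 6 / (3 - 2 * s))
    (hf2 : Tendsto (fun t => f t / t ^ (q - 1)) atTop (𝓝 0))
    (ϑ : ℝ) (hϑ : 4 < ϑ ∧ ϑ < 6 / (3 - 2 * s))
    (hf3 : ∀ t : ℝ, 0 < t → 0 < ϑ * Fprim f t ∧ ϑ * Fprim f t ≤ f t * t)
    (hf4 : ∀ t₁ t₂ : ℝ, 0 < t₁ → t₁ ≤ t₂ → f t₁ / t₁ ^ 3 ≤ f t₂ / t₂ ^ 3)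
    (K a : ℝ) (hK : 2 / m₀ < K) (ha : 0 < a) (hfa : f a = V₀ / K * a) :
    ∀ ε > (0:ℝ), ∀ d : ℝ, ∀ u : ℕ → E3 → ℝ,
      PSSeqE s M V Ω f V₀ K a ε d u →
      (∃ B : ℝ, ∀ n, normSqE s V ε (u n) ≤ B) ∧
      ∃ C : ℝ, ∀ n,
        (ϑ - 2) / (2 * ϑ) * (m₀ - 1 / K) * normSqE s V ε (u n)
          ≤ C + Real.sqrt (normSqE s V ε (u n)) := by
  intro ε hε d u hPS
  obtain ⟨hmem, hJ, hJ'⟩ := hPS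
  have hϑ4 : 4 < ϑ := hϑ.1
  have hϑpos : (0:ℝ) < ϑ := by linarith
  have hKpos : 0 < K := lt_trans (by positivity) hK
  have hm0K : 0 < m₀ - 1/K := by
    have h1 : 1/K < m₀/2 := by
      rw [div_lt_div_iff₀ hKpos (by norm_num)]
      have := (div_lt_iff₀ hm₀).mp hK
      linarith
    linarith
  set c : ℝ := (ϑ - 2) / (2 * ϑ) * (m₀ - 1 / K) with hcdef
  have hcpos : 0 < c := mul_pos (div_pos (by linarith) (by linarith)) hm0K
  have hcm₀ : c ≤ m₀ := by
    have h1 : (ϑ - 2)/(2*ϑ) ≤ 1/2 := by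
      rw [div_le_div_iff₀ (by linarith) (by norm_num)]; linarith
    have h2 : c ≤ 1/2 * (m₀ - 1/K) := mul_le_mul_of_nonneg_right h1 hm0K.le
    have h3 : (0:ℝ) < 1/K := by positivity
    linarith
  have hV_lb : ∀ x : E3, V₀ ≤ V x := fun x => hVinf.1 ⟨x, rfl⟩
  have hVterm_nonneg : ∀ w : E3 → ℝ,
      0 ≤ ∫ x : E3, V (ε • x) * w x * w x := by
    intro w
    refine integral_nonneg fun x => ?_
    have h1 : 0 ≤ V (ε • x) := le_trans hV₀.le (hV_lb _)
    rw [mul_assoc]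
    exact mul_nonneg h1 (mul_self_nonneg _)
  have ht_nonneg : ∀ w : E3 → ℝ, 0 ≤ normSqE s V ε w := fun w =>
    add_nonneg (aux_fracInner_self_nonneg s w) (hVterm_nonneg w)
  -- eventual bounds
  obtain ⟨N₁, hN₁⟩ : ∃ N, ∀ n ≥ N, Je s M V Ω f V₀ K a ε (u n) ≤ |d| + 1 := by
    obtain ⟨N, hN⟩ := Metric.tendsto_atTop.mp hJ 1 one_pos
    refine ⟨N, fun n hn => ?_⟩
    have h1 := hN n hn
    rw [Real.dist_eq] at h1
    have h2 := (abs_lt.mp h1).2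
    have := le_abs_self d
    linarith
  obtain ⟨N₂, hN₂⟩ := hJ' 1 one_pos
  set N := max N₁ N₂ with hNdef
  -- key estimate for n ≥ N
  have hkey : ∀ n, N ≤ n →
      c * normSqE s V ε (u n) ≤ (|d| + 1) + Real.sqrt (normSqE s V ε (u n)) := by
    intro n hn
    have hd1 : (0:ℝ) ≤ |d| + 1 := by positivity
    have ht0 : 0 ≤ normSqE s V ε (u n) := ht_nonneg (u n)
    by_cases htz : normSqE s V ε (u n) = 0
    · rw [htz]
      simp [Real.sqrt_zero]
      positivity
    have htpos : 0 < normSqE s V ε (u n) := lt_of_le_of_ne ht0 (Ne.symm htz)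
    set t : ℝ := normSqE s V ε (u n) with htdef
    set r : ℝ := Real.sqrt t with hrdef
    have hr : 0 < r := Real.sqrt_pos.2 htpos
    have hr2 : r ^ 2 = t := Real.sq_sqrt ht0
    obtain ⟨⟨hL2, hGag⟩, hVI⟩ := hmem n
    -- the normalized test function
    set φ : E3 → ℝ := fun x => r⁻¹ * u n x with hφdef
    have hφmem : MemHe s V ε φ := by
      refine ⟨⟨hL2.const_mul _, ?_⟩, ?_⟩
      · refine (hGag.const_mul ((r⁻¹)^2)).congr
          (Filter.Eventually.of_forall fun p => ?_)
        show (r⁻¹)^2 * ((u n p.1 - u n p.2)^2 / ‖p.1 - p.2‖ ^ (3 + 2*s))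
            = (r⁻¹ * u n p.1 - r⁻¹ * u n p.2)^2 / ‖p.1 - p.2‖ ^ (3 + 2*s)
        ring
      · refine (hVI.const_mul ((r⁻¹)^2)).congr
          (Filter.Eventually.of_forall fun x => ?_)
        show (r⁻¹)^2 * (V (ε • x) * u n x ^ 2) = V (ε • x) * (r⁻¹ * u n x) ^ 2
        ring
    have hφns : normSqE s V ε φ = 1 := by
      have e0 : normSqE s V ε φ
          = fracInner s φ φ + ∫ x : E3, V (ε • x) * φ x * φ x := rfl
      have e1 : ∀ x : E3, V (ε • x) * φ x * φ x
          = (r⁻¹)^2 * (V (ε • x) * u n x * u n x) := fun x => by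
        simp only [hφdef]; ring
      rw [e0]
      simp_rw [e1]
      rw [MeasureTheory.integral_const_mul, hφdef, aux_fracInner_const_mul_self]
      have e2 : fracInner s (u n) (u n) + ∫ x : E3, V (ε • x) * u n x * u n x = t := rfl
      have : (r⁻¹)^2 * fracInner s (u n) (u n)
          + (r⁻¹)^2 * ∫ x : E3, V (ε • x) * u n x * u n x = (r⁻¹)^2 * t := by
        rw [← e2]; ring
      rw [this, inv_pow, hr2, inv_mul_cancel₀ (ne_of_gt htpos)]
    -- linearity of the derivative pairing
    have hJd : JeDeriv s M V Ω f V₀ K a ε (u n) φ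
        = r⁻¹ * JeDeriv s M V Ω f V₀ K a ε (u n) (u n) := by
      unfold JeDeriv innerE
      have e1 : ∀ x : E3, V (ε • x) * u n x * φ x
          = r⁻¹ * (V (ε • x) * u n x * u n x) := fun x => by
        simp only [hφdef]; ring
      have e2 : ∀ x : E3, gpen Ω f V₀ K a (ε • x) (u n x) * φ x
          = r⁻¹ * (gpen Ω f V₀ K a (ε • x) (u n x) * u n x) := fun x => by
        simp only [hφdef]; ring
      simp_rw [e1, e2, MeasureTheory.integral_const_mul]
      rw [hφdef, aux_fracInner_const_mul_right]
      have e3 : normSqE s V ε φ = normSqE s V ε fun x => r⁻¹ * u n x := by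
        rw [hφdef]
      ring
    have hφtest := hN₂ n (le_trans (le_max_right N₁ N₂) hn) φ hφmem (le_of_eq hφns)
    have hJdbound : |JeDeriv s M V Ω f V₀ K a ε (u n) (u n)| ≤ r := by
      have e : JeDeriv s M V Ω f V₀ K a ε (u n) (u n)
          = r * JeDeriv s M V Ω f V₀ K a ε (u n) φ := by
        rw [hJd, ← mul_assoc, mul_inv_cancel₀ (ne_of_gt hr), one_mul]
      rw [e, abs_mul, abs_of_pos hr]
      calc r * |JeDeriv s M V Ω f V₀ K a ε (u n) φ| ≤ r * 1 :=
            mul_le_mul_of_nonneg_left hφtest hr.le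
        _ = r := mul_one r
    have hJle : Je s M V Ω f V₀ K a ε (u n) ≤ |d| + 1 :=
      hN₁ n (le_trans (le_max_left N₁ N₂) hn)
    have hMh := aux_Mhat_ge hm₀ hMcont hM1 hM3 ht0
    have hMt : m₀ ≤ M t := hM1 t ht0
    have hJdeq : JeDeriv s M V Ω f V₀ K a ε (u n) (u n)
        = M t * t - ∫ x : E3, gpen Ω f V₀ K a (ε • x) (u n x) * u n x := rfl
    have hJeeq : Je s M V Ω f V₀ K a ε (u n)
        = 1 / 2 * Mhat M t - ∫ x : E3, Gpen Ω f V₀ K a (ε • x) (u n x) := rfl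
    by_cases hIgu : MeasureTheory.Integrable
        (fun x : E3 => gpen Ω f V₀ K a (ε • x) (u n x) * u n x) volume
    · -- good case
      have hcoef : 0 ≤ (ϑ - 2)/(2*ϑ) * (1/K) :=
        mul_nonneg (div_nonneg (by linarith) (by linarith)) (by positivity)
      have hBint : MeasureTheory.Integrable
          (fun x : E3 => 1/ϑ * (gpen Ω f V₀ K a (ε • x) (u n x) * u n x)
            + (ϑ - 2)/(2*ϑ) * (1/K) * (V (ε • x) * u n x ^ 2)) volume :=
        (hIgu.const_mul _).add (hVI.const_mul _)
      have hptwise : ∀ x : E3, Gpen Ω f V₀ K a (ε • x) (u n x)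
          ≤ 1/ϑ * (gpen Ω f V₀ K a (ε • x) (u n x) * u n x)
            + (ϑ - 2)/(2*ϑ) * (1/K) * (V (ε • x) * u n x ^ 2) := by
        intro x
        have h1 := aux_Gpen_key (Ω := Ω) hϑ4 hV₀ hKpos ha hfcont hfneg hf3 hfa
          (ε • x) (u n x)
        have h2 : V₀ * u n x ^ 2 ≤ V (ε • x) * u n x ^ 2 :=
          mul_le_mul_of_nonneg_right (hV_lb _) (sq_nonneg _)
        have h3 : (ϑ - 2)/(2*ϑ) * (V₀/K) * u n x ^ 2
            = (ϑ - 2)/(2*ϑ) * (1/K) * (V₀ * u n x ^ 2) := by ring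
        have h4 : (ϑ - 2)/(2*ϑ) * (1/K) * (V₀ * u n x ^ 2)
            ≤ (ϑ - 2)/(2*ϑ) * (1/K) * (V (ε • x) * u n x ^ 2) :=
          mul_le_mul_of_nonneg_left h2 hcoef
        linarith
      have hIG_le : (∫ x : E3, Gpen Ω f V₀ K a (ε • x) (u n x))
          ≤ 1/ϑ * (∫ x : E3, gpen Ω f V₀ K a (ε • x) (u n x) * u n x)
            + (ϑ - 2)/(2*ϑ) * (1/K) * ∫ x : E3, V (ε • x) * u n x ^ 2 := by
        have h1 := MeasureTheory.integral_mono_of_nonneg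
          (Filter.Eventually.of_forall fun x =>
            aux_Gpen_nonneg hV₀ hKpos ha hfneg hf3 (ε • x) (u n x))
          hBint (Filter.Eventually.of_forall hptwise)
        rwa [MeasureTheory.integral_add (hIgu.const_mul _) (hVI.const_mul _),
          MeasureTheory.integral_const_mul, MeasureTheory.integral_const_mul] at h1
      have hVu2_le : (∫ x : E3, V (ε • x) * u n x ^ 2) ≤ t := by
        have e : (fun x : E3 => V (ε • x) * u n x * u n x)
            = fun x : E3 => V (ε • x) * u n x ^ 2 := funext fun x => by ring
        have e2 : t = fracInner s (u n) (u n)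
            + ∫ x : E3, V (ε • x) * u n x * u n x := rfl
        rw [e2, e]
        have := aux_fracInner_self_nonneg s (u n)
        linarith
      -- combine
      have hprod1 : m₀ * t * (1/4 - 1/ϑ) ≤ M t * t * (1/4 - 1/ϑ) := by
        refine mul_le_mul_of_nonneg_right
          (mul_le_mul_of_nonneg_right hMt ht0) ?_
        have : 1/ϑ ≤ 1/4 := by
          rw [div_le_div_iff₀ hϑpos (by norm_num)]; linarith
        linarith
      have hprod2 : (ϑ - 2)/(2*ϑ) * (1/K) * (∫ x : E3, V (ε • x) * u n x ^ 2)
          ≤ (ϑ - 2)/(2*ϑ) * (1/K) * t := mul_le_mul_of_nonneg_left hVu2_le hcoef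
      have hc_t : c * t = m₀ * t * (1/2 - 1/ϑ) - (ϑ - 2)/(2*ϑ) * (1/K) * t := by
        rw [hcdef]; field_simp
      have hmain : c * t ≤ Je s M V Ω f V₀ K a ε (u n)
          - 1/ϑ * JeDeriv s M V Ω f V₀ K a ε (u n) (u n) := by
        rw [hJeeq, hJdeq]
        have expand : 1/ϑ * (M t * t
            - ∫ x : E3, gpen Ω f V₀ K a (ε • x) (u n x) * u n x)
            = 1/ϑ * (M t * t)
              - 1/ϑ * ∫ x : E3, gpen Ω f V₀ K a (ε • x) (u n x) * u n x := by ring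
        rw [expand]
        generalize (∫ x : E3, Gpen Ω f V₀ K a (ε • x) (u n x)) = IGv
          at hIG_le ⊢
        generalize (∫ x : E3, gpen Ω f V₀ K a (ε • x) (u n x) * u n x) = Iguv
          at hIG_le ⊢
        generalize (∫ x : E3, V (ε • x) * u n x ^ 2) = IVv at hIG_le hprod2
        linarith [hMh, hIG_le, hprod1, hprod2, hc_t]
      -- conclude
      have habs : - JeDeriv s M V Ω f V₀ K a ε (u n) (u n) ≤ r :=
        le_trans (neg_le_abs _) hJdbound
      have h1ϑ : 1/ϑ * r ≤ r := by
        have h2 : 1/ϑ ≤ 1 := by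
          rw [div_le_one hϑpos]; linarith
        calc 1/ϑ * r ≤ 1 * r := mul_le_mul_of_nonneg_right h2 hr.le
          _ = r := one_mul r
      have h5 : - (1/ϑ * JeDeriv s M V Ω f V₀ K a ε (u n) (u n)) ≤ 1/ϑ * r := by
        rw [← mul_neg]
        exact mul_le_mul_of_nonneg_left habs (by positivity : (0:ℝ) ≤ 1/ϑ)
      generalize JeDeriv s M V Ω f V₀ K a ε (u n) (u n) = Jd at hmain h5
      generalize Je s M V Ω f V₀ K a ε (u n) = JE at hmain hJle
      linarith
    · -- bad case: the nonlinear term integral is junk `0`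
      have hIgu0 : (∫ x : E3, gpen Ω f V₀ K a (ε • x) (u n x) * u n x) = 0 :=
        MeasureTheory.integral_undef hIgu
      have hJd2 : JeDeriv s M V Ω f V₀ K a ε (u n) (u n) = M t * t := by
        rw [hJdeq, hIgu0, sub_zero]
      have h1 : m₀ * t ≤ M t * t := mul_le_mul_of_nonneg_right hMt ht0
      have h2 : M t * t ≤ r := by
        rw [← hJd2]
        exact le_trans
          (le_abs_self (JeDeriv s M V Ω f V₀ K a ε (u n) (u n))) hJdbound
      have h3 : c * t ≤ m₀ * t := mul_le_mul_of_nonneg_right hcm₀ ht0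
      linarith
  -- assemble constant C
  set C : ℝ := max (|d| + 1)
      (∑ k ∈ Finset.range N, c * normSqE s V ε (u k)) with hCdef
  have hC0 : 0 ≤ C := le_trans (by positivity) (le_max_left _ _)
  have hCall : ∀ n, c * normSqE s V ε (u n)
      ≤ C + Real.sqrt (normSqE s V ε (u n)) := by
    intro n
    have hsq : 0 ≤ Real.sqrt (normSqE s V ε (u n)) := Real.sqrt_nonneg _
    by_cases hn : N ≤ n
    · exact le_trans (hkey n hn) (add_le_add_left (le_max_left _ _) _)
    · have hnN : n ∈ Finset.range N := Finset.mem_range.mpr (not_le.mp hn)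
      have h1 : c * normSqE s V ε (u n)
          ≤ ∑ k ∈ Finset.range N, c * normSqE s V ε (u k) :=
        Finset.single_le_sum
          (fun k _ => mul_nonneg hcpos.le (ht_nonneg (u k))) hnN
      exact le_trans h1 (le_trans (le_max_right _ _) (by linarith))
  constructor
  · -- boundedness
    refine ⟨max ((2/c)^2) (C^2), fun n => ?_⟩
    have ht0 : 0 ≤ normSqE s V ε (u n) := ht_nonneg (u n)
    by_cases hcase : normSqE s V ε (u n) ≤ (2/c)^2
    · exact le_trans hcase (le_max_left _ _)
    · push_neg at hcase
      set t : ℝ := normSqE s V ε (u n) with htdef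
      have h2c : 2/c ≤ Real.sqrt t :=
        (Real.le_sqrt (by positivity) ht0).mpr hcase.le
      have hsq : Real.sqrt t * Real.sqrt t = t := Real.mul_self_sqrt ht0
      have hsqnn : 0 ≤ Real.sqrt t := Real.sqrt_nonneg _
      have h1 : 2 * Real.sqrt t ≤ c * t := by
        have hmm : 2/c * Real.sqrt t ≤ Real.sqrt t * Real.sqrt t :=
          mul_le_mul_of_nonneg_right h2c hsqnn
        rw [hsq] at hmm
        calc 2 * Real.sqrt t = c * (2/c * Real.sqrt t) := by
              field_simp
          _ ≤ c * t := mul_le_mul_of_nonneg_left hmm hcpos.le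
      have h2 := hCall n
      have h3 : Real.sqrt t ≤ C := by linarith
      have h4 : t ≤ C^2 := by
        rw [← hsq]
        calc Real.sqrt t * Real.sqrt t ≤ C * C :=
          mul_le_mul h3 h3 hsqnn hC0
        _ = C^2 := (sq C).symm
      exact le_trans h4 (le_max_right _ _)
  · exact ⟨C, hCall⟩
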